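/- Let G be a finite 2-group which is a non-trivial OC-group. Then the index of Z(G) in the second center Z_2(G) equals 2, i.e. |Z_2(G)/Z(G)| = 2. -/

import Mathlib

section OCaux

variable {G : Type} [Group G]

private lemma oc_center_flip {a b : G} (h : a * b ∈ Subgroup.center G) :
    b * a ∈ Subgroup.center G := by
  have hc := Subgroup.mem_center_iff.mp h a
  have e1 : b * a = a⁻¹ * (a * b * a) := by group
  rw [e1, show a * b * a = a * (a * b) from hc.symm]
  have e2 : a⁻¹ * (a * (a * b)) = a * b := by group
  rw [e2]; exact h

private lemma oc_comm_mem {u : G} (hu : u ∈ upperCentralSeries G 2) (g : G) :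
    u * g * u⁻¹ * g⁻¹ ∈ Subgroup.center G := by
  have := (mem_upperCentralSeries_succ_iff (n := 1)).mp hu g
  rwa [upperCentralSeries_one] at this

/-- conjugates of elements of the second center lie in the same coset of the center -/
private lemma oc_conj_coset {u : G} (hu : u ∈ upperCentralSeries G 2) (g : G) :
    (g * u * g⁻¹) * u⁻¹ ∈ Subgroup.center G := by
  have h1 : u * g⁻¹ * u⁻¹ * g⁻¹⁻¹ ∈ Subgroup.center G := oc_comm_mem hu g⁻¹
  rw [inv_inv] at h1
  have h2 := oc_center_flip h1
  have : g * (u * g⁻¹ * u⁻¹) = (g * u * g⁻¹) * u⁻¹ := by group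
  rwa [this] at h2

private lemma oc_double (hG2 : IsPGroup 2 G) {u : G} [Finite G] (hu : u ≠ 1) :
    orderOf u = 2 * orderOf (u ^ 2) := by
  haveI : Fact (Nat.Prime 2) := ⟨Nat.prime_two⟩
  obtain ⟨k, hk⟩ := IsPGroup.iff_orderOf.mp hG2 u
  rcases k with _ | k
  · exact absurd (orderOf_eq_one_iff.mp (by simpa using hk)) hu
  have h2 : orderOf (u ^ 2) = orderOf u / Nat.gcd (orderOf u) 2 :=
    orderOf_pow' u (by norm_num)
  rw [h2, hk]
  have hg : Nat.gcd (2 ^ (k + 1)) 2 = 2 :=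
    Nat.gcd_eq_right (dvd_pow_self 2 (Nat.succ_ne_zero k))
  rw [hg, pow_succ]
  omega

private lemma oc_order_mul (hG2 : IsPGroup 2 G) [Finite G] {v w : G} {a m : ℕ}
    (hcomm : Commute v w) (hv : orderOf v = 2 ^ a) (hw : orderOf w = 2 ^ m)
    (h : a < m) : orderOf (v * w) = 2 ^ m := by
  haveI : Fact (Nat.Prime 2) := ⟨Nat.prime_two⟩
  obtain ⟨m, rfl⟩ : ∃ m', m = m' + 1 := ⟨m - 1, by omega⟩
  have hdvd : orderOf (v * w) ∣ 2 ^ (m + 1) := by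
    rw [orderOf_dvd_iff_pow_eq_one, hcomm.mul_pow]
    have h1 : v ^ 2 ^ (m + 1) = 1 := by
      rw [← orderOf_dvd_iff_pow_eq_one, hv]
      exact pow_dvd_pow 2 (by omega)
    have h2 : w ^ 2 ^ (m + 1) = 1 := by
      rw [← orderOf_dvd_iff_pow_eq_one, hw]
    rw [h1, h2, one_mul]
  have hne : (v * w) ^ 2 ^ m ≠ 1 := by
    rw [hcomm.mul_pow]
    have h1 : v ^ 2 ^ m = 1 := by
      rw [← orderOf_dvd_iff_pow_eq_one, hv]
      exact pow_dvd_pow 2 (by omega)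
    rw [h1, one_mul]
    intro hc
    have := orderOf_dvd_iff_pow_eq_one.mpr hc
    rw [hw] at this
    exact absurd (Nat.pow_dvd_pow_iff_le_right (by norm_num) |>.mp this) (by omega)
  obtain ⟨i, hi, hoi⟩ := (Nat.dvd_prime_pow Nat.prime_two).mp hdvd
  have : i = m + 1 := by
    by_contra hcon
    apply hne
    rw [← orderOf_dvd_iff_pow_eq_one, hoi]
    exact pow_dvd_pow 2 (by omega)
  rw [hoi, this]


private lemma oc_sq_central [Finite G] 
    (hOC : ∀ x y : G, x ∉ Subgroup.center G → y ∉ Subgroup.center G →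
      orderOf x = orderOf y → IsConj x y)
    {u : G} (hu2 : u ∈ upperCentralSeries G 2) (hu : u ∉ Subgroup.center G) :
    u ^ 2 ∈ Subgroup.center G := by
  have huinv : u⁻¹ ∉ Subgroup.center G := fun h => hu (by simpa using inv_mem h)
  obtain ⟨c, hconj⟩ := isConj_iff.mp (hOC u u⁻¹ hu huinv (orderOf_inv u).symm)
  have := oc_conj_coset hu2 c
  rw [hconj] at this
  have h2 : u⁻¹ * u⁻¹ = (u ^ 2)⁻¹ := by group
  rw [h2] at this
  simpa using inv_mem this

/-- choose in the coset `w * center` a noncentral element of order `2^e` or `2^(e+1)` -/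
private lemma oc_adjust [Finite G] (hG2 : IsPGroup 2 G) {z₀ : G} {e : ℕ}
    (hz₀ : z₀ ∈ Subgroup.center G)
    (hmax : ∀ z ∈ Subgroup.center G, orderOf z ≤ orderOf z₀)
    (he : orderOf z₀ = 2 ^ e)
    {w : G} (hw2 : w ∈ upperCentralSeries G 2) (hw : w ∉ Subgroup.center G)
    (hsq : w ^ 2 ∈ Subgroup.center G) :
    ∃ u' : G, u' ∈ upperCentralSeries G 2 ∧ u' ∉ Subgroup.center G ∧
      w⁻¹ * u' ∈ Subgroup.center G ∧
      (orderOf u' = 2 ^ e ∨ orderOf u' = 2 ^ (e + 1)) := by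
  haveI : Fact (Nat.Prime 2) := ⟨Nat.prime_two⟩
  have hwne : w ≠ 1 := fun h => hw (h ▸ (Subgroup.center G).one_mem)
  obtain ⟨a, ha⟩ := IsPGroup.iff_orderOf.mp hG2 (w ^ 2)
  have hale : a ≤ e := by
    have := hmax _ hsq
    rw [ha, he] at this
    exact (Nat.pow_le_pow_iff_right (by norm_num)).mp this
  have hdw : orderOf w = 2 * orderOf (w ^ 2) := oc_double hG2 hwne
  rcases (show a = e ∨ a + 1 = e ∨ a + 1 < e by omega) with h | h | h
  · refine ⟨w, hw2, hw, by simpa using (Subgroup.center G).one_mem, Or.inr ?_⟩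
    rw [hdw, ha, h, pow_succ, Nat.mul_comm]
  · refine ⟨w, hw2, hw, by simpa using (Subgroup.center G).one_mem, Or.inl ?_⟩
    rw [hdw, ha, ← h, pow_succ, Nat.mul_comm]
  · -- replace w by w * z₀
    have hz₀2 : z₀ ∈ upperCentralSeries G 2 := by
      have : Subgroup.center G ≤ upperCentralSeries G 2 := by
        rw [← upperCentralSeries_one G]
        exact upperCentralSeries_mono G (by omega)
      exact this hz₀
    have hz₀ne : z₀ ≠ 1 := by
      intro hc
      rw [hc, orderOf_one] at he
      have : e = 0 := by
        by_contra hne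
        have : 2 ^ e ≥ 2 := Nat.one_lt_two_pow hne
        omega
      omega
    have hoz2 : orderOf (z₀ ^ 2) = 2 ^ (e - 1) := by
      have := oc_double hG2 hz₀ne
      rw [he] at this
      obtain ⟨e', rfl⟩ : ∃ e', e = e' + 1 := ⟨e - 1, by omega⟩
      simp only [Nat.add_sub_cancel]
      rw [pow_succ] at this
      omega
    have hcent : ∀ x : G, Commute x z₀ := fun x =>
      Subgroup.mem_center_iff.mp hz₀ x
    refine ⟨w * z₀, mul_mem hw2 hz₀2, ?_, ?_, Or.inl ?_⟩
    · intro hc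
      apply hw
      have : w = (w * z₀) * z₀⁻¹ := by group
      rw [this]
      exact mul_mem hc (inv_mem hz₀)
    · have : w⁻¹ * (w * z₀) = z₀ := by group
      rw [this]; exact hz₀
    · have hsqeq : (w * z₀) ^ 2 = w ^ 2 * z₀ ^ 2 := (hcent w).mul_pow 2
      have hord : orderOf ((w * z₀) ^ 2) = 2 ^ (e - 1) := by
        rw [hsqeq]
        exact oc_order_mul hG2 ((hcent (w ^ 2)).pow_right 2) ha hoz2 (by omega)
      have hne1 : w * z₀ ≠ 1 := by
        intro hc
        apply hw
        have : w = z₀⁻¹ := by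
          rw [← one_mul z₀⁻¹, ← hc]; group
        rw [this]; exact inv_mem hz₀
      rw [oc_double hG2 hne1, hord]
      obtain ⟨e', rfl⟩ : ∃ e', e = e' + 1 := ⟨e - 1, by omega⟩
      simp only [Nat.add_sub_cancel]
      rw [pow_succ, Nat.mul_comm]

private lemma oc_same_coset [Finite G] (hG2 : IsPGroup 2 G)
    (hOC : ∀ x y : G, x ∉ Subgroup.center G → y ∉ Subgroup.center G →
      orderOf x = orderOf y → IsConj x y)
    {u v : G} (hu2 : u ∈ upperCentralSeries G 2) (hv2 : v ∈ upperCentralSeries G 2)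
    (hu : u ∉ Subgroup.center G) (hv : v ∉ Subgroup.center G) :
    u⁻¹ * v ∈ Subgroup.center G := by
  by_contra hne
  haveI : Fact (Nat.Prime 2) := ⟨Nat.prime_two⟩
  obtain ⟨z₀', hmax'⟩ := Finite.exists_max (fun z : Subgroup.center G => orderOf (z : G))
  set z₀ := (z₀' : G) with hz₀def
  have hz₀ : z₀ ∈ Subgroup.center G := z₀'.2
  have hmax : ∀ z ∈ Subgroup.center G, orderOf z ≤ orderOf z₀ := fun z hz => hmax' ⟨z, hz⟩
  obtain ⟨e, he⟩ := IsPGroup.iff_orderOf.mp hG2 z₀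
  have huv2 : u * v ∈ upperCentralSeries G 2 := mul_mem hu2 hv2
  have husq := oc_sq_central hOC hu2 hu
  have hvsq := oc_sq_central hOC hv2 hv
  have huv : u * v ∉ Subgroup.center G := by
    intro hc
    apply hne
    have h : u⁻¹ * v = (u ^ 2)⁻¹ * (u * v) := by group
    rw [h]; exact mul_mem (inv_mem husq) hc
  have huvsq := oc_sq_central hOC huv2 huv
  have d12 : v * u⁻¹ ∉ Subgroup.center G := fun hc => hne (oc_center_flip hc)
  have d13 : (u * v) * u⁻¹ ∉ Subgroup.center G := by
    intro hc
    have h2 := oc_center_flip hc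
    have h3 : u⁻¹ * (u * v) = v := by group
    rw [h3] at h2
    exact hv h2
  have d23 : (u * v) * v⁻¹ ∉ Subgroup.center G := by
    have h : (u * v) * v⁻¹ = u := by group
    rw [h]; exact hu
  obtain ⟨u₁, hu₁2, hu₁c, hu₁z, hu₁o⟩ := oc_adjust hG2 hz₀ hmax he hu2 hu husq
  obtain ⟨u₂, hu₂2, hu₂c, hu₂z, hu₂o⟩ := oc_adjust hG2 hz₀ hmax he hv2 hv hvsq
  obtain ⟨u₃, hu₃2, hu₃c, hu₃z, hu₃o⟩ := oc_adjust hG2 hz₀ hmax he huv2 huv huvsq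
  have hpig : orderOf u₁ = orderOf u₂ ∨ orderOf u₁ = orderOf u₃ ∨
      orderOf u₂ = orderOf u₃ := by
    rcases hu₁o with h1 | h1 <;> rcases hu₂o with h2 | h2 <;>
      rcases hu₃o with h3 | h3 <;> omega
  have key : ∀ wi wj xi xj : G, xi ∈ upperCentralSeries G 2 →
      xi ∉ Subgroup.center G → xj ∉ Subgroup.center G →
      wi⁻¹ * xi ∈ Subgroup.center G → wj⁻¹ * xj ∈ Subgroup.center G →
      orderOf xi = orderOf xj → wj * wi⁻¹ ∈ Subgroup.center G := by
    intro wi wj xi xj hxi2 hxi hxj hwi hwj hord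
    obtain ⟨c, hc⟩ := isConj_iff.mp (hOC xi xj hxi hxj hord)
    have hC : xj * xi⁻¹ ∈ Subgroup.center G := by
      have h := oc_conj_coset hxi2 c; rwa [hc] at h
    have m0 : xj⁻¹ * wj ∈ Subgroup.center G := by
      simpa [mul_inv_rev] using inv_mem hwj
    have m1 := oc_center_flip m0
    have m3 := oc_center_flip hwi
    have h : (wj * xj⁻¹) * (xj * xi⁻¹) * (xi * wi⁻¹) = wj * wi⁻¹ := by group
    rw [← h]
    exact mul_mem (mul_mem m1 hC) m3
  rcases hpig with h | h | h
  · exact d12 (key u v u₁ u₂ hu₁2 hu₁c hu₂c hu₁z hu₂z h)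
  · exact d13 (key u (u * v) u₁ u₃ hu₁2 hu₁c hu₃c hu₁z hu₃z h)
  · exact d23 (key v (u * v) u₂ u₃ hu₂2 hu₂c hu₃c hu₂z hu₃z h)

end OCaux

/-- **Claim 2 in Lemma 2.6.** If `G` is a finite 2-group which is a
non-trivial OC-group, then `|Z₂(G) / Z(G)| = 2`, i.e. the center has index `2` in the
second center. -/
theorem second_center_index_two (G : Type) [Group G] [Finite G]
    (hG2 : IsPGroup 2 G)
    (hOC : ∀ x y : G, x ∉ Subgroup.center G → y ∉ Subgroup.center G →
      orderOf x = orderOf y → IsConj x y)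
    (h1 : ⊥ < Subgroup.center G) (h2 : Subgroup.center G < ⊤) :
    (Subgroup.center G).relIndex (upperCentralSeries G 2) = 2 := by
  haveI : Fact (Nat.Prime 2) := ⟨Nat.prime_two⟩
  obtain ⟨u₀, hu₀2, hu₀⟩ : ∃ u₀, u₀ ∈ upperCentralSeries G 2 ∧
      u₀ ∉ Subgroup.center G := by
    by_contra hc
    push_neg at hc
    have hle : ∀ n, upperCentralSeries G n ≤ Subgroup.center G := by
      intro n
      induction n with
      | zero =>
        rw [show upperCentralSeries G 0 = ⊥ from rfl]
        exact bot_le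
      | succ n ih =>
        intro x hx
        apply hc
        refine (mem_upperCentralSeries_succ_iff (n := 1)).mpr ?_
        intro y
        rw [upperCentralSeries_one]
        exact ih (mem_upperCentralSeries_succ_iff.mp hx y)
    haveI := hG2.isNilpotent
    obtain ⟨n, hn⟩ := Group.IsNilpotent.nilpotent (G := G)
    have htop : (⊤ : Subgroup G) ≤ Subgroup.center G := hn ▸ hle n
    exact absurd (lt_of_lt_of_le h2 htop) (lt_irrefl _)
  rw [Subgroup.relIndex, Subgroup.index_eq_card, Nat.card_eq_two_iff]
  refine ⟨1, QuotientGroup.mk ⟨u₀, hu₀2⟩, ?_, ?_⟩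
  · intro hcon
    have h := (QuotientGroup.eq_one_iff _).mp hcon.symm
    rw [Subgroup.mem_subgroupOf] at h
    exact hu₀ h
  · rw [Set.eq_univ_iff_forall]
    intro q
    refine QuotientGroup.induction_on q ?_
    rintro ⟨w, hw2⟩
    rw [Set.mem_insert_iff]
    by_cases hw : w ∈ Subgroup.center G
    · left
      exact (QuotientGroup.eq_one_iff _).mpr (Subgroup.mem_subgroupOf.mpr hw)
    · right
      refine Set.mem_singleton_iff.mpr ?_
      refine QuotientGroup.eq.mpr ?_
      rw [Subgroup.mem_subgroupOf]
      simpa using oc_same_coset hG2 hOC hw2 hu₀2 hw hu₀
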